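/- Under hypotheses H1–H5 (b(0)=0; b non-decreasing on (0,∞); b continuous on [0,∞) and C¹ with b' non-increasing on (0,∞); b(|x|) ≤ b(-|x|); b non-increasing on (-∞,0]), for any two solutions y ≤ ȳ of y_t = ∫₀ᵗ b(y_s + ω_s) ds with ω continuous, ω₀ = 0, one has for every t ∈ [0,T]: b(ȳ_t + ω_t) − b(y_t + ω_t) ≤ (ȳ_t − y_t) · b'(|y_t + ω_t|+), where b'(z+) denotes the right limit of b' at z (possibly infinite at 0). -/
import Mathlib

open MeasureTheory intervalIntegral Filter Topology

lemma myMVT (b b' : ℝ → ℝ)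
    (hbcont : ContinuousOn b (Set.Ici (0 : ℝ)))
    (hbderiv : ∀ x ∈ Set.Ioi (0 : ℝ), HasDerivAt b (b' x) x)
    (M u v : ℝ) (hu : 0 ≤ u) (huv : u < v)
    (hM : ∀ x, u < x → x < v → b' x ≤ M) :
    b v - b u ≤ M * (v - u) := by
  set g : ℝ → ℝ := fun x => M * x - b x with hg
  have hgd : ∀ x ∈ Set.Ioo u v, HasDerivAt g (M - b' x) x := by
    intro x hx
    have hx0 : x ∈ Set.Ioi (0 : ℝ) := lt_of_le_of_lt hu hx.1
    have h1 : HasDerivAt (fun x : ℝ => M * x) M x := by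
      simpa using (hasDerivAt_id x).const_mul M
    exact h1.sub (hbderiv x hx0)
  have hmono : MonotoneOn g (Set.Icc u v) := by
    apply monotoneOn_of_deriv_nonneg (convex_Icc u v)
    · exact ((continuous_const.mul continuous_id).continuousOn).sub
        (hbcont.mono (fun x hx => le_trans hu hx.1))
    · rw [interior_Icc]
      exact fun x hx => ((hgd x hx).differentiableAt).differentiableWithinAt
    · rw [interior_Icc]
      intro x hx
      rw [(hgd x hx).deriv]
      have := hM x hx.1 hx.2
      linarith
  have := hmono (Set.left_mem_Icc.2 huv.le) (Set.right_mem_Icc.2 huv.le) huv.le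
  simp only [hg] at this
  nlinarith

lemma myb'nonneg (b b' : ℝ → ℝ)
    (hbmono : MonotoneOn b (Set.Ioi (0 : ℝ)))
    (hbderiv : ∀ x ∈ Set.Ioi (0 : ℝ), HasDerivAt b (b' x) x)
    (x : ℝ) (hx : 0 < x) : 0 ≤ b' x := by
  have h := hasDerivAt_iff_tendsto_slope.mp (hbderiv x hx)
  have h2 : Tendsto (slope b x) (𝓝[>] x) (𝓝 (b' x)) :=
    h.mono_left (nhdsWithin_mono x (fun y hy => Set.mem_compl_singleton_iff.2 (ne_of_gt hy)))
  refine ge_of_tendsto h2 ?_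
  filter_upwards [self_mem_nhdsWithin] with y hy
  rw [slope_def_field]
  have hxy : x < y := hy
  have : b x ≤ b y := hbmono hx (lt_trans hx hxy) hxy.le
  have h3 : (0:ℝ) < y - x := by linarith
  exact div_nonneg (by linarith) h3.le

theorem stmt1 (T : ℝ) (hT : 0 ≤ T) (b b' : ℝ → ℝ)
    (hb0 : b 0 = 0)
    (hbmono : MonotoneOn b (Set.Ioi (0 : ℝ)))
    (hbcont : ContinuousOn b (Set.Ici (0 : ℝ)))
    (hbderiv : ∀ x ∈ Set.Ioi (0 : ℝ), HasDerivAt b (b' x) x)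
    (hb'cont : ContinuousOn b' (Set.Ioi (0 : ℝ)))
    (hb'anti : AntitoneOn b' (Set.Ioi (0 : ℝ)))
    (hb4 : ∀ x : ℝ, b |x| ≤ b (-|x|))
    (hb5 : AntitoneOn b (Set.Iic (0 : ℝ)))
    (D : ℝ → EReal)
    (hD : ∀ z : ℝ, 0 ≤ z → Tendsto (fun x => (b' x : EReal)) (𝓝[>] z) (𝓝 (D z)))
    (ω : ℝ → ℝ) (hω : ContinuousOn ω (Set.Icc 0 T)) (hω0 : ω 0 = 0)
    (hωne : ∃ t ∈ Set.Icc (0 : ℝ) T, ω t ≠ 0)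
    (y ybar : ℝ → ℝ)
    (hy : ContinuousOn y (Set.Icc 0 T)) (hybar : ContinuousOn ybar (Set.Icc 0 T))
    (hsoly : ∀ t ∈ Set.Icc (0 : ℝ) T, y t = ∫ s in (0 : ℝ)..t, b (y s + ω s))
    (hsolybar : ∀ t ∈ Set.Icc (0 : ℝ) T, ybar t = ∫ s in (0 : ℝ)..t, b (ybar s + ω s))
    (hle : ∀ t ∈ Set.Icc (0 : ℝ) T, y t ≤ ybar t) :
    ∀ t ∈ Set.Icc (0 : ℝ) T,
      (b (ybar t + ω t) - b (y t + ω t) : EReal) ≤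
        (ybar t - y t : ℝ) * D |y t + ω t| := by
  -- preliminary facts about D
  have hDnonneg : ∀ z : ℝ, 0 ≤ z → (0 : EReal) ≤ D z := by
    intro z hz
    refine ge_of_tendsto (hD z hz) ?_
    filter_upwards [self_mem_nhdsWithin] with x hx
    exact_mod_cast myb'nonneg b b' hbmono hbderiv x (lt_of_le_of_lt hz hx)
  have hDge : ∀ z x : ℝ, 0 ≤ z → z < x → (b' x : EReal) ≤ D z := by
    intro z x hz hzx
    refine ge_of_tendsto (hD z hz) ?_
    filter_upwards [Ioo_mem_nhdsGT_of_mem ⟨le_refl z, hzx⟩] with w hw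
    exact_mod_cast hb'anti (Set.mem_Ioi.2 (lt_of_le_of_lt hz hw.1))
      (Set.mem_Ioi.2 (lt_of_le_of_lt hz hzx)) hw.2.le
  intro t ht
  set u : ℝ := y t + ω t with hu
  set v : ℝ := ybar t + ω t with hv
  have huv : u ≤ v := by
    have := hle t ht
    simp only [hu, hv]; linarith
  have hdiff : ybar t - y t = v - u := by simp only [hu, hv]; ring
  rcases eq_or_lt_of_le huv with heq | hlt
  · -- u = v
    have h1 : ybar t = y t := by
      have : y t + ω t = ybar t + ω t := heq
      linarith
    have h2 : ((ybar t - y t : ℝ) : EReal) = 0 := by rw [h1]; simp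
    have h3 : (↑(b u) : EReal) - ↑(b u) = 0 := by
      rw [← EReal.coe_sub]; simp
    rw [← heq, h3, h2, zero_mul]
  · -- u < v
    have hvpos : (0:ℝ) < v - u := by linarith
    have hcoepos : (0 : EReal) < ((ybar t - y t : ℝ) : EReal) := by
      rw [hdiff]; exact_mod_cast hvpos
    set z : ℝ := |u| with hz
    have hz0 : 0 ≤ z := abs_nonneg u
    rcases eq_or_ne (D z) ⊤ with hDtop | hDtop
    · rw [hDtop, EReal.mul_top_of_pos hcoepos]
      exact le_top
    · have hDbot : D z ≠ ⊥ := by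
        intro hbot
        have := hDnonneg z hz0
        rw [hbot] at this
        exact absurd this (by simp)
      obtain ⟨M, hM⟩ : ∃ M : ℝ, D z = (M : EReal) :=
        ⟨(D z).toReal, (EReal.coe_toReal hDtop hDbot).symm⟩
      have hM0 : (0:ℝ) ≤ M := by
        have := hDnonneg z hz0; rw [hM] at this; exact_mod_cast this
      have hMx : ∀ x : ℝ, z < x → b' x ≤ M := by
        intro x hx
        have := hDge z x hz0 hx; rw [hM] at this; exact_mod_cast this
      -- reduce to a real inequality
      rw [hM, ← EReal.coe_sub, ← EReal.coe_mul, EReal.coe_le_coe_iff, hdiff]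
      -- goal : b v - b u ≤ (v - u) * M
      rcases le_or_gt 0 u with hu0 | hu0
      · -- 0 ≤ u, z = u
        have hzu : z = u := abs_of_nonneg hu0
        have := myMVT b b' hbcont hbderiv M u v hu0 hlt
          (fun x hx _ => hMx x (hzu ▸ hx))
        nlinarith
      · -- u < 0, z = -u
        have hzu : z = -u := abs_of_neg hu0
        have hbu : b (-u) ≤ b u := by
          have := hb4 u
          rwa [abs_of_neg hu0, neg_neg] at this
        rcases le_or_gt v 0 with hv0 | hv0
        · -- both ≤ 0 : b v ≤ b u
          have : b v ≤ b u := hb5 (Set.mem_Iic.2 hu0.le) (Set.mem_Iic.2 hv0) huv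
          nlinarith
        · rcases le_or_gt v (-u) with hvu | hvu
          · -- b v ≤ b (-u) ≤ b u
            have h1 : b v ≤ b (-u) := by
              rcases eq_or_lt_of_le hvu with h | h
              · rw [h]
              · exact hbmono (Set.mem_Ioi.2 hv0) (Set.mem_Ioi.2 (by linarith)) hvu
            nlinarith
          · -- -u < v : MVT on [-u, v]
            have := myMVT b b' hbcont hbderiv M (-u) v (by linarith) hvu
              (fun x hx _ => hMx x (hzu ▸ hx))
            nlinarith
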